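/- Let n ≥ 1, a ≥ 0, and let φ : ℝ → ℝ be differentiable and satisfy F(φ(t)) e^{φ(t)} = e^{nt}/n + F(a) e^a with φ(t) > a ≥ 0 for all t, where F(s) = ∑_{r=0}^{n-1} (-1)^{n-r-1} ((n-1)!/r!) s^r. Then φ satisfies the ODE φ(t)^{n-1} φ'(t) e^{φ(t)} = e^{nt}, and 0 < φ'(t) < n for all t ∈ ℝ. -/

import Mathlib

open Real Finset

lemma key_tel (n : ℕ) (hn : 1 ≤ n) (s : ℝ) :
    ∑ r ∈ Finset.range n,
      ((-1 : ℝ) ^ (n - r - 1) * ((Nat.factorial (n - 1) : ℝ) / (Nat.factorial r : ℝ)) * (r * s ^ (r - 1))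
        + (-1 : ℝ) ^ (n - r - 1) * ((Nat.factorial (n - 1) : ℝ) / (Nat.factorial r : ℝ)) * s ^ r)
      = s ^ (n - 1) := by
  set f : ℕ → ℝ := fun i =>
    if i = 0 then 0 else
      (-1 : ℝ) ^ (n - (i - 1) - 1) * ((Nat.factorial (n - 1) : ℝ) / (Nat.factorial (i - 1) : ℝ)) * s ^ (i - 1)
    with hf
  have hterm : ∀ r ∈ Finset.range n,
      ((-1 : ℝ) ^ (n - r - 1) * ((Nat.factorial (n - 1) : ℝ) / (Nat.factorial r : ℝ)) * (r * s ^ (r - 1))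
        + (-1 : ℝ) ^ (n - r - 1) * ((Nat.factorial (n - 1) : ℝ) / (Nat.factorial r : ℝ)) * s ^ r)
      = f (r + 1) - f r := by
    intro r hr
    rw [Finset.mem_range] at hr
    match r with
    | 0 => simp [hf]
    | (j + 1) =>
      have hj : j + 1 < n := hr
      simp only [hf, if_neg (Nat.succ_ne_zero _), Nat.add_sub_cancel]
      have hsign : n - (j + 1) - 1 + 1 = n - j - 1 := by omega
      have hfac : (Nat.factorial (j + 1) : ℝ) = (j + 1) * Nat.factorial j := by
        rw [Nat.factorial_succ]; push_cast; ring
      have hne : (j : ℝ) + 1 ≠ 0 := by positivity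
      have h1 : (-1 : ℝ) ^ (n - j - 1) = -(-1 : ℝ) ^ (n - (j + 1) - 1) := by
        rw [← hsign, pow_succ]; ring
      rw [h1]
      push_cast [hfac]
      field_simp
      ring
  rw [Finset.sum_congr rfl hterm, Finset.sum_range_sub]
  have h0 : f 0 = 0 := by simp [hf]
  have hn' : n ≠ 0 := by omega
  have hsub : n - (n - 1) - 1 = 0 := by omega
  simp only [hf, hn', if_neg hn', hsub, pow_zero, one_mul, h0, sub_zero]
  simp [div_self (by positivity : (((n-1).factorial : ℝ)) ≠ 0)]

lemma key_deriv (n : ℕ) (hn : 1 ≤ n) (s : ℝ) :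
    HasDerivAt (fun x : ℝ =>
        (∑ r ∈ Finset.range n,
          (-1 : ℝ) ^ (n - r - 1) * ((Nat.factorial (n - 1) : ℝ) / (Nat.factorial r : ℝ)) * x ^ r)
        * Real.exp x)
      (s ^ (n - 1) * Real.exp s) s := by
  have hsum : HasDerivAt (fun x : ℝ =>
      ∑ r ∈ Finset.range n,
        (-1 : ℝ) ^ (n - r - 1) * ((Nat.factorial (n - 1) : ℝ) / (Nat.factorial r : ℝ)) * x ^ r)
      (∑ r ∈ Finset.range n,
        (-1 : ℝ) ^ (n - r - 1) * ((Nat.factorial (n - 1) : ℝ) / (Nat.factorial r : ℝ)) * (r * s ^ (r - 1))) s := by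
    apply HasDerivAt.fun_sum
    intro r _
    exact (hasDerivAt_pow r s).const_mul _
  have h := hsum.mul (Real.hasDerivAt_exp s)
  refine h.congr_deriv ?_
  have := key_tel n hn s
  rw [Finset.sum_add_distrib] at this
  rw [← this]
  ring

lemma key_lt (n : ℕ) (hn : 1 ≤ n) (a s : ℝ) (ha : 0 ≤ a) (has : a < s) :
    (∑ r ∈ Finset.range n,
        (-1 : ℝ) ^ (n - r - 1) * ((Nat.factorial (n - 1) : ℝ) / (Nat.factorial r : ℝ)) * s ^ r)
      * Real.exp s
    - (∑ r ∈ Finset.range n,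
        (-1 : ℝ) ^ (n - r - 1) * ((Nat.factorial (n - 1) : ℝ) / (Nat.factorial r : ℝ)) * a ^ r)
      * Real.exp a
    < s ^ (n - 1) * Real.exp s := by
  set G : ℝ → ℝ := fun x =>
    (∑ r ∈ Finset.range n,
        (-1 : ℝ) ^ (n - r - 1) * ((Nat.factorial (n - 1) : ℝ) / (Nat.factorial r : ℝ)) * x ^ r)
      * Real.exp x with hG
  rcases eq_or_lt_of_le hn with h1 | h2
  · -- n = 1
    have hn1 : n = 1 := h1.symm
    subst hn1
    have : (0:ℝ) < Real.exp a := Real.exp_pos a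
    simp only [hG, Finset.sum_range_one, Nat.sub_self, pow_zero, one_mul, Nat.factorial_zero,
      Nat.cast_one, div_one]
    norm_num
    linarith
  · -- n ≥ 2
    set H : ℝ → ℝ := fun x => x ^ (n - 1) * Real.exp x - G x with hH
    have hHd : ∀ x : ℝ, HasDerivAt H ((n - 1 : ℕ) * x ^ (n - 2) * Real.exp x) x := by
      intro x
      have h1 : HasDerivAt (fun y : ℝ => y ^ (n - 1) * Real.exp y)
          (((n-1 : ℕ) * x ^ (n - 1 - 1)) * Real.exp x + x ^ (n-1) * Real.exp x) x :=
        (hasDerivAt_pow (n-1) x).mul (Real.hasDerivAt_exp x)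
      have h2 := h1.sub (key_deriv n hn x)
      have hnn : n - 1 - 1 = n - 2 := by omega
      rw [hnn] at h1
      refine (h1.sub (key_deriv n hn x)).congr_deriv ?_
      ring
    have hmono : StrictMonoOn H (Set.Icc a s) := by
      apply strictMonoOn_of_deriv_pos (convex_Icc a s)
      · have hdH : Differentiable ℝ H := fun x => (hHd x).differentiableAt
        exact hdH.continuous.continuousOn
      · intro x hx
        rw [interior_Icc] at hx
        rw [(hHd x).deriv]
        have hx0 : 0 < x := lt_of_le_of_lt ha hx.1
        have : (0:ℝ) < (n - 1 : ℕ) := by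
          have : 1 ≤ n - 1 := by omega
          exact_mod_cast Nat.lt_of_lt_of_le Nat.zero_lt_one this
        positivity
    have hlt : H a < H s := hmono (Set.left_mem_Icc.2 has.le) (Set.right_mem_Icc.2 has.le) has
    have hge : (0:ℝ) ≤ a ^ (n - 1) * Real.exp a := by positivity
    simp only [hH, hG] at hlt
    linarith

/-- If `φ` is differentiable and satisfies the implicit equation
`F(φ(t)) e^{φ(t)} = e^{nt}/n + F(a)e^a` with `φ > a ≥ 0`, then
`φ^{n-1} φ' e^{φ} = e^{nt}` and `0 < φ' < n`. -/
theorem stmt_3 (n : ℕ) (hn : 1 ≤ n) (a : ℝ) (ha : 0 ≤ a)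
    (F : ℝ → ℝ)
    (hF : ∀ x : ℝ, F x = ∑ r ∈ Finset.range n,
      (-1 : ℝ) ^ (n - r - 1) * ((Nat.factorial (n - 1) : ℝ) / (Nat.factorial r : ℝ)) * x ^ r)
    (φ : ℝ → ℝ) (hφdiff : Differentiable ℝ φ)
    (hφa : ∀ t, a < φ t)
    (hφeq : ∀ t, F (φ t) * Real.exp (φ t) = Real.exp (n * t) / n + F a * Real.exp a) :
    ∀ t : ℝ,
      φ t ^ (n - 1) * deriv φ t * Real.exp (φ t) = Real.exp (n * t) ∧
      0 < deriv φ t ∧ deriv φ t < n := by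
  have hFfun : F = fun x : ℝ => ∑ r ∈ Finset.range n,
      (-1 : ℝ) ^ (n - r - 1) * ((Nat.factorial (n - 1) : ℝ) / (Nat.factorial r : ℝ)) * x ^ r :=
    funext hF
  have hnR : (0:ℝ) < n := by exact_mod_cast Nat.lt_of_lt_of_le Nat.zero_lt_one hn
  intro t
  -- derivative of LHS via chain rule
  have hchain : HasDerivAt (fun u => F (φ u) * Real.exp (φ u))
      (φ t ^ (n - 1) * Real.exp (φ t) * deriv φ t) t := by
    have hG := key_deriv n hn (φ t)
    have hcomp := hG.comp t (hφdiff t).hasDerivAt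
    have hfe : (fun u => F (φ u) * Real.exp (φ u))
        = (fun x : ℝ => (∑ r ∈ Finset.range n,
            (-1 : ℝ) ^ (n - r - 1) * ((Nat.factorial (n - 1) : ℝ) / (Nat.factorial r : ℝ)) * x ^ r)
          * Real.exp x) ∘ φ := by
      funext u; simp [Function.comp, hF]
    rw [hfe]
    exact hcomp
  -- derivative of RHS
  have hrhs : HasDerivAt (fun u => Real.exp (n * u) / n + F a * Real.exp a)
      (Real.exp (n * t)) t := by
    have h1 : HasDerivAt (fun u : ℝ => (n:ℝ) * u) (n:ℝ) t := by
      simpa using (hasDerivAt_id t).const_mul (n:ℝ)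
    have h2 := (h1.exp.div_const (n:ℝ)).add_const (F a * Real.exp a)
    refine h2.congr_deriv ?_
    field_simp
  have heq : (fun u => F (φ u) * Real.exp (φ u))
      = fun u => Real.exp (n * u) / n + F a * Real.exp a := funext hφeq
  rw [heq] at hchain
  have hODE : φ t ^ (n - 1) * Real.exp (φ t) * deriv φ t = Real.exp (n * t) :=
    hchain.unique hrhs
  have hφpos : 0 < φ t := lt_of_le_of_lt ha (hφa t)
  have hP : 0 < φ t ^ (n - 1) * Real.exp (φ t) := by positivity
  have hdpos : 0 < deriv φ t := by
    nlinarith [Real.exp_pos ((n:ℝ) * t), hODE, hP]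
  refine ⟨by linarith [hODE], hdpos, ?_⟩
  -- upper bound
  have hkey := key_lt n hn a (φ t) ha (hφa t)
  rw [← hF, ← hF] at hkey
  have h3 : Real.exp (n * t) / n < φ t ^ (n - 1) * Real.exp (φ t) := by
    have := hφeq t
    linarith
  have h4 : Real.exp (n * t) < n * (φ t ^ (n - 1) * Real.exp (φ t)) := by
    rw [div_lt_iff₀ hnR] at h3
    linarith
  nlinarith [hODE, hP]
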